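/- Under the hole-punching graph-cluster randomization design with 0 < p_t < 1 and 0 < p_hp < 1, suppose all potential outcomes are non-negative: Y_i(t) ≥ 0 for all units i and t ∈ {0,1}. Then for t1 ≠ t2 in {0,1}, the cluster-form covariance estimator Ĉov[μ̂(t1), μ̂(t2)] = (1/N²)·[ (1/(p(t1)·p(t2)) − 1/p(t1,t2))·Σ_{c∈𝒞} Ŝ_c(t1,t2) − Q̂(t1,t1)/(2·p(t1)) − Q̂(t2,t2)/(2·p(t2)) ], where Ŝ_c(t1,t2) = Σ_{i∈c: Z_i=t1} Σ_{j∈c: Z_j=t2} Y_i(t1)·Y_j(t2) and Q̂(t,t) = Σ_{i: Z_i=t} Y_i(t)², is downward biased: E[Ĉov[μ̂(t1), μ̂(t2)]] ≤ Cov[μ̂(t1), μ̂(t2)]. -/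

import Mathlib

open MeasureTheory ProbabilityTheory

/-- The Bernoulli measure on `Bool` with success probability `p`. -/
noncomputable def bernoulliMeasure (p : ℝ) : Measure Bool :=
  ENNReal.ofReal p • Measure.dirac true + ENNReal.ofReal (1 - p) • Measure.dirac false

instance bernoulliMeasure.instIsFiniteMeasure (p : ℝ) :
    IsFiniteMeasure (bernoulliMeasure p) where
  measure_univ_lt_top := by
    simp [_root_.bernoulliMeasure]

/-- The hole-punching graph-cluster randomization design measure on the product space
`(C → Bool) × (Fin N → Bool)`: i.i.d. Bernoulli(`pt`) cluster-level assignments and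
i.i.d. Bernoulli(`php`) unit-level flips, all mutually independent. -/
noncomputable def designMeasure (C : Type*) [Fintype C] (N : ℕ) (pt php : ℝ) :
    Measure ((C → Bool) × (Fin N → Bool)) :=
  (Measure.pi fun _ : C => bernoulliMeasure pt).prod
    (Measure.pi fun _ : Fin N => bernoulliMeasure php)

/-- The treatment `Z_i` of unit `i`: cluster assignment XOR individual flip. -/
def treat {C : Type*} {N : ℕ} (c : Fin N → C) (i : Fin N)
    (ω : (C → Bool) × (Fin N → Bool)) : Bool :=
  xor (ω.1 (c i)) (ω.2 i)

/-- The marginal propensity `p_i(t) = Pr(Z_i = t)`. -/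
noncomputable def margProp {C : Type*} [Fintype C] {N : ℕ} (pt php : ℝ) (c : Fin N → C)
    (i : Fin N) (t : Bool) : ℝ :=
  (designMeasure C N pt php {ω | treat c i ω = t}).toReal

/-- The joint propensity `p_{ij}(t₁,t₂) = Pr(Z_i = t₁ ∧ Z_j = t₂)`. -/
noncomputable def jointProp {C : Type*} [Fintype C] {N : ℕ} (pt php : ℝ) (c : Fin N → C)
    (i j : Fin N) (t1 t2 : Bool) : ℝ :=
  (designMeasure C N pt php {ω | treat c i ω = t1 ∧ treat c j ω = t2}).toReal

/-- The Horvitz–Thompson estimator `μ̂(t)`. -/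
noncomputable def htEst {C : Type*} [Fintype C] {N : ℕ} (pt php : ℝ) (c : Fin N → C)
    (Y : Fin N → Bool → ℝ) (t : Bool) (ω : (C → Bool) × (Fin N → Bool)) : ℝ :=
  (1 / (N : ℝ)) * ∑ i, if treat c i ω = t then Y i t / margProp pt php c i t else 0

/-- The realized within-cluster sum `Ŝ_c(t1,t2) = Σ_{i∈c: Z_i=t1} Σ_{j∈c: Z_j=t2} Y_i(t1)·Y_j(t2)`
for cluster `k`, as a function of the random assignment `ω`. -/
noncomputable def Shat {C : Type*} [DecidableEq C] {N : ℕ} (c : Fin N → C)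
    (Y : Fin N → Bool → ℝ) (t1 t2 : Bool) (k : C)
    (ω : (C → Bool) × (Fin N → Bool)) : ℝ :=
  ∑ i ∈ Finset.univ.filter (fun i => c i = k ∧ treat c i ω = t1),
    ∑ j ∈ Finset.univ.filter (fun j => c j = k ∧ treat c j ω = t2), Y i t1 * Y j t2

/-- The realized diagonal sum `Q̂(t,t) = Σ_{i: Z_i=t} Y_i(t)²`, as a function of the random
assignment `ω`. -/
noncomputable def Qhat {C : Type*} {N : ℕ} (c : Fin N → C)
    (Y : Fin N → Bool → ℝ) (t : Bool) (ω : (C → Bool) × (Fin N → Bool)) : ℝ :=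
  ∑ i ∈ Finset.univ.filter (fun i => treat c i ω = t), Y i t ^ 2

/-- The cluster-form variance estimator
`V̂ar[μ̂(t)] = (1/N²)·[(1/p(t)² − 1/p(t,t))·Σ_c Ŝ_c(t,t) + (1/p(t,t) − 1/p(t))·Q̂(t,t)]`. -/
noncomputable def varHat {C : Type*} [Fintype C] [DecidableEq C] {N : ℕ} (c : Fin N → C)
    (Y : Fin N → Bool → ℝ) (p : Bool → ℝ) (pj : Bool → Bool → ℝ) (t : Bool)
    (ω : (C → Bool) × (Fin N → Bool)) : ℝ :=
  (1 / (N : ℝ) ^ 2) *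
    ((1 / (p t) ^ 2 - 1 / pj t t) * (∑ k : C, Shat c Y t t k ω)
      + (1 / pj t t - 1 / p t) * Qhat c Y t ω)

/-- The cluster-form covariance estimator
`Ĉov[μ̂(t1),μ̂(t2)] = (1/N²)·[(1/(p(t1)·p(t2)) − 1/p(t1,t2))·Σ_c Ŝ_c(t1,t2)
− Q̂(t1,t1)/(2·p(t1)) − Q̂(t2,t2)/(2·p(t2))]`. -/
noncomputable def covHat {C : Type*} [Fintype C] [DecidableEq C] {N : ℕ} (c : Fin N → C)
    (Y : Fin N → Bool → ℝ) (p : Bool → ℝ) (pj : Bool → Bool → ℝ) (t1 t2 : Bool)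
    (ω : (C → Bool) × (Fin N → Bool)) : ℝ :=
  (1 / (N : ℝ) ^ 2) *
    ((1 / (p t1 * p t2) - 1 / pj t1 t2) * (∑ k : C, Shat c Y t1 t2 k ω)
      - Qhat c Y t1 ω / (2 * p t1) - Qhat c Y t2 ω / (2 * p t2))

/-- The covariance of two real random variables: `Cov[X,Y] = E[(X − E X)(Y − E Y)]`. -/
noncomputable def cov {Ω : Type*} [MeasurableSpace Ω] (P : Measure Ω) (X Y : Ω → ℝ) : ℝ :=
  ∫ ω, (X ω - ∫ x, X x ∂P) * (Y ω - ∫ x, Y x ∂P) ∂P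


section AuxLemmas

open MeasureTheory

lemma bern_true (p : ℝ) : bernoulliMeasure p {true} = ENNReal.ofReal p := by
  simp [_root_.bernoulliMeasure, Measure.dirac_apply, Set.indicator_apply]

lemma bern_false (p : ℝ) : bernoulliMeasure p {false} = ENNReal.ofReal (1 - p) := by
  simp [_root_.bernoulliMeasure, Measure.dirac_apply, Set.indicator_apply]

lemma bern_isProb {p : ℝ} (h0 : 0 ≤ p) (h1 : p ≤ 1) :
    IsProbabilityMeasure (bernoulliMeasure p) := by
  constructor
  simp only [_root_.bernoulliMeasure, Measure.coe_add, Measure.coe_smul, Pi.add_apply, Pi.smul_apply,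
    Measure.dirac_apply, Set.indicator_apply, Set.mem_univ, if_true, smul_eq_mul, mul_one,
    Pi.one_apply]
  rw [← ENNReal.ofReal_add h0 (by linarith)]
  norm_num

lemma bern_pos {p : ℝ} (h0 : 0 < p) (h1 : p < 1) (t : Bool) :
    0 < bernoulliMeasure p {t} := by
  cases t
  · rw [bern_false]; simp [ENNReal.ofReal_pos]; linarith
  · rw [bern_true]; simp [ENNReal.ofReal_pos]; exact h0

lemma pi_cyl_one {ι : Type*} [Fintype ι] [DecidableEq ι] (m : Measure Bool)
    [IsProbabilityMeasure m] (a : ι) (s : Set Bool) :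
    Measure.pi (fun _ : ι => m) {g | g a ∈ s} = m s := by
  have h : {g : ι → Bool | g a ∈ s}
      = Set.pi Set.univ (fun k => if k = a then s else Set.univ) := by
    ext g
    simp only [Set.mem_setOf_eq, Set.mem_pi, Set.mem_univ, forall_true_left]
    constructor
    · intro h k; by_cases hk : k = a <;> simp [hk, h]
    · intro h; simpa using h a
  rw [h, Measure.pi_pi]
  rw [Finset.prod_eq_single a (fun b _ hb => by rw [if_neg hb]; exact measure_univ)
    (by simp)]
  simp

lemma pi_cyl_two {ι : Type*} [Fintype ι] [DecidableEq ι] (m : Measure Bool)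
    [IsProbabilityMeasure m] {a b : ι} (hab : a ≠ b) (s u : Set Bool) :
    Measure.pi (fun _ : ι => m) {g | g a ∈ s ∧ g b ∈ u} = m s * m u := by
  have h : {g : ι → Bool | g a ∈ s ∧ g b ∈ u}
      = Set.pi Set.univ (fun k => if k = a then s else if k = b then u else Set.univ) := by
    ext g
    simp only [Set.mem_setOf_eq, Set.mem_pi, Set.mem_univ, forall_true_left]
    constructor
    · rintro ⟨h1, h2⟩ k
      by_cases hk : k = a
      · simp [hk, h1]
      · by_cases hk' : k = b
        · simp [hk, hk', Ne.symm hab, h2]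
        · simp [hk, hk']
    · intro h
      refine ⟨by simpa using h a, ?_⟩
      have := h b
      simpa [Ne.symm hab] using this
  rw [h, Measure.pi_pi]
  rw [← Finset.prod_subset (Finset.subset_univ ({a, b} : Finset ι))
    (fun x _ hx => by
      simp only [Finset.mem_insert, Finset.mem_singleton, not_or] at hx
      rw [if_neg hx.1, if_neg hx.2]; exact measure_univ)]
  rw [Finset.prod_pair hab, if_pos rfl, if_neg (Ne.symm hab), if_pos rfl]

lemma xor_eq_iff (x y t : Bool) : xor x y = t ↔ x = xor y t := by
  revert x y t; decide

section Design

variable {C : Type*} [Fintype C] [DecidableEq C] {N : ℕ}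
variable {pt php : ℝ} (h0t : 0 < pt) (h1t : pt < 1) (h0h : 0 < php) (h1h : php < 1)
include h0t h1t h0h h1h

lemma designProb : IsProbabilityMeasure (designMeasure C N pt php) := by
  haveI := bern_isProb h0t.le h1t.le
  haveI := bern_isProb h0h.le h1h.le
  unfold designMeasure
  infer_instance

lemma marg_meas (c : Fin N → C) (i : Fin N) (t : Bool) :
    designMeasure C N pt php {ω | treat c i ω = t}
      = ∑ u : Bool, bernoulliMeasure pt {xor u t} * bernoulliMeasure php {u} := by
  haveI := bern_isProb h0t.le h1t.le
  haveI := bern_isProb h0h.le h1h.le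
  have hset : {ω : (C → Bool) × (Fin N → Bool) | treat c i ω = t}
      = ⋃ u : Bool, ({g : C → Bool | g (c i) ∈ ({xor u t} : Set Bool)}
          ×ˢ {f : Fin N → Bool | f i ∈ ({u} : Set Bool)}) := by
    ext ω
    simp only [Set.mem_setOf_eq, Set.mem_iUnion, Set.mem_prod, Set.mem_singleton_iff, treat]
    constructor
    · intro h
      exact ⟨ω.2 i, (xor_eq_iff _ _ _).mp h, rfl⟩
    · rintro ⟨u, h1, h2⟩
      subst h2
      exact (xor_eq_iff _ _ _).mpr h1
  rw [hset, measure_iUnion ?hd (fun u => MeasurableSet.of_discrete)]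
  · rw [tsum_fintype]
    congr 1
    ext u
    rw [designMeasure, Measure.prod_prod, pi_cyl_one, pi_cyl_one]
  case hd =>
    intro u v huv
    simp only [Function.onFun]
    rw [Set.disjoint_left]
    rintro ⟨g, f⟩ ⟨_, h2⟩ ⟨_, h4⟩
    simp only [Set.mem_setOf_eq, Set.mem_singleton_iff] at h2 h4
    exact huv (h2 ▸ h4 ▸ rfl)

lemma joint_meas_diff (c : Fin N → C) {i j : Fin N} (hij : c i ≠ c j) (t1 t2 : Bool) :
    designMeasure C N pt php {ω | treat c i ω = t1 ∧ treat c j ω = t2}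
      = designMeasure C N pt php {ω | treat c i ω = t1}
        * designMeasure C N pt php {ω | treat c j ω = t2} := by
  haveI := bern_isProb h0t.le h1t.le
  haveI := bern_isProb h0h.le h1h.le
  have hij' : i ≠ j := fun h => hij (h ▸ rfl)
  have hset : {ω : (C → Bool) × (Fin N → Bool) | treat c i ω = t1 ∧ treat c j ω = t2}
      = ⋃ u : Bool × Bool, ({g : C → Bool | g (c i) ∈ ({xor u.1 t1} : Set Bool)
            ∧ g (c j) ∈ ({xor u.2 t2} : Set Bool)}
          ×ˢ {f : Fin N → Bool | f i ∈ ({u.1} : Set Bool) ∧ f j ∈ ({u.2} : Set Bool)}) := by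
    ext ω
    simp only [Set.mem_setOf_eq, Set.mem_iUnion, Set.mem_prod, Set.mem_singleton_iff, treat]
    constructor
    · rintro ⟨h1, h2⟩
      exact ⟨(ω.2 i, ω.2 j), ⟨(xor_eq_iff _ _ _).mp h1, (xor_eq_iff _ _ _).mp h2⟩, rfl, rfl⟩
    · rintro ⟨⟨u, v⟩, ⟨ha, hb⟩, h1, h2⟩
      subst h1; subst h2
      exact ⟨(xor_eq_iff _ _ _).mpr ha, (xor_eq_iff _ _ _).mpr hb⟩
  rw [hset, measure_iUnion ?hd (fun u => MeasurableSet.of_discrete), tsum_fintype]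
  · have hval : ∀ u : Bool × Bool,
        designMeasure C N pt php ({g : C → Bool | g (c i) ∈ ({xor u.1 t1} : Set Bool)
            ∧ g (c j) ∈ ({xor u.2 t2} : Set Bool)}
          ×ˢ {f : Fin N → Bool | f i ∈ ({u.1} : Set Bool) ∧ f j ∈ ({u.2} : Set Bool)})
        = (bernoulliMeasure pt {xor u.1 t1} * bernoulliMeasure php {u.1})
          * (bernoulliMeasure pt {xor u.2 t2} * bernoulliMeasure php {u.2}) := by
      intro u
      rw [designMeasure, Measure.prod_prod, pi_cyl_two _ hij, pi_cyl_two _ hij']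
      ring
    rw [Finset.sum_congr rfl (fun u _ => hval u), Fintype.sum_prod_type,
      marg_meas h0t h1t h0h h1h, marg_meas h0t h1t h0h h1h, Finset.sum_mul_sum]
  case hd =>
    intro u v huv
    simp only [Function.onFun]
    rw [Set.disjoint_left]
    rintro ⟨g, f⟩ ⟨_, h2, h3⟩ ⟨_, h5, h6⟩
    simp only [Set.mem_setOf_eq, Set.mem_singleton_iff] at h2 h3 h5 h6
    exact huv (Prod.ext (h2 ▸ h5 ▸ rfl) (h3 ▸ h6 ▸ rfl))

lemma joint_meas_same_lb (c : Fin N → C) {i j : Fin N} (hij : i ≠ j) (hc : c i = c j)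
    (t1 t2 : Bool) :
    0 < designMeasure C N pt php {ω | treat c i ω = t1 ∧ treat c j ω = t2} := by
  haveI := bern_isProb h0t.le h1t.le
  haveI := bern_isProb h0h.le h1h.le
  have hsub : ({g : C → Bool | g (c i) ∈ ({t1} : Set Bool)}
      ×ˢ {f : Fin N → Bool | f i ∈ ({false} : Set Bool) ∧ f j ∈ ({xor t1 t2} : Set Bool)})
      ⊆ {ω : (C → Bool) × (Fin N → Bool) | treat c i ω = t1 ∧ treat c j ω = t2} := by
    rintro ⟨g, f⟩ ⟨h1, h2, h3⟩
    simp only [Set.mem_setOf_eq, Set.mem_singleton_iff] at h1 h2 h3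
    constructor
    · simp [treat, h1, h2]
    · rw [treat]
      simp only
      rw [← hc, h1, h3]
      cases t1 <;> cases t2 <;> rfl
  refine lt_of_lt_of_le ?_ (measure_mono hsub)
  rw [designMeasure, Measure.prod_prod, pi_cyl_one, pi_cyl_two _ hij]
  exact ENNReal.mul_pos (ne_of_gt (bern_pos h0t h1t _))
    (ne_of_gt (ENNReal.mul_pos (ne_of_gt (bern_pos h0h h1h _)) (ne_of_gt (bern_pos h0h h1h _))))

lemma marg_pos (c : Fin N → C) (i : Fin N) (t : Bool) :
    0 < margProp pt php c i t := by
  haveI := designProb (C := C) (N := N) h0t h1t h0h h1h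
  rw [margProp, ENNReal.toReal_pos_iff]
  constructor
  · rw [marg_meas h0t h1t h0h h1h]
    refine lt_of_lt_of_le ?_ (Finset.single_le_sum (f := fun u => bernoulliMeasure pt {xor u t}
      * bernoulliMeasure php {u}) (fun _ _ => zero_le) (Finset.mem_univ false))
    exact ENNReal.mul_pos (ne_of_gt (bern_pos h0t h1t _)) (ne_of_gt (bern_pos h0h h1h _))
  · exact lt_of_le_of_lt prob_le_one ENNReal.one_lt_top

lemma joint_pos (c : Fin N → C) {i j : Fin N} (hij : i ≠ j) (hc : c i = c j) (t1 t2 : Bool) :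
    0 < jointProp pt php c i j t1 t2 := by
  haveI := designProb (C := C) (N := N) h0t h1t h0h h1h
  rw [jointProp, ENNReal.toReal_pos_iff]
  exact ⟨joint_meas_same_lb h0t h1t h0h h1h c hij hc t1 t2,
    lt_of_le_of_lt prob_le_one ENNReal.one_lt_top⟩

lemma joint_eq_mul (c : Fin N → C) {i j : Fin N} (hij : c i ≠ c j) (t1 t2 : Bool) :
    jointProp pt php c i j t1 t2 = margProp pt php c i t1 * margProp pt php c j t2 := by
  rw [jointProp, joint_meas_diff h0t h1t h0h h1h c hij, ENNReal.toReal_mul, margProp, margProp]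

omit h0t h1t h0h h1h in
lemma joint_diag (c : Fin N → C) (i : Fin N) {t1 t2 : Bool} (ht : t1 ≠ t2) :
    jointProp pt php c i i t1 t2 = 0 := by
  have hempty : {ω : (C → Bool) × (Fin N → Bool) | treat c i ω = t1 ∧ treat c i ω = t2}
      = ∅ := by
    ext ω
    simp only [Set.mem_setOf_eq, Set.mem_empty_iff_false, iff_false, not_and]
    intro h1 h2
    exact ht (h1 ▸ h2 ▸ rfl)
  rw [jointProp, hempty, measure_empty, ENNReal.toReal_zero]

end Design

lemma integral_ite_eq {Ω : Type*} [MeasurableSpace Ω] [DiscreteMeasurableSpace Ω]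
    (μ : Measure Ω) (P : Ω → Prop) [DecidablePred P] (a : ℝ) :
    ∫ ω, (if P ω then a else 0) ∂μ = (μ {ω | P ω}).toReal * a := by
  have h : (fun ω => if P ω then a else 0) = Set.indicator {ω | P ω} (fun _ => a) := by
    ext ω; simp [Set.indicator_apply, Set.mem_setOf_eq]
  rw [h, integral_indicator_const a MeasurableSet.of_discrete, smul_eq_mul]
  rfl

lemma cov_eq_sub {Ω : Type*} [MeasurableSpace Ω] [Fintype Ω] [MeasurableSingletonClass Ω]
    (μ : Measure Ω) [IsProbabilityMeasure μ] (X Z : Ω → ℝ) :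
    cov μ X Z = (∫ ω, X ω * Z ω ∂μ) - (∫ ω, X ω ∂μ) * (∫ ω, Z ω ∂μ) := by
  unfold cov
  have h : ∀ ω, (X ω - ∫ x, X x ∂μ) * (Z ω - ∫ x, Z x ∂μ)
      = X ω * Z ω - (∫ x, X x ∂μ) * Z ω - X ω * (∫ x, Z x ∂μ)
        + (∫ x, X x ∂μ) * (∫ x, Z x ∂μ) := fun ω => by ring
  simp only [h]
  rw [integral_add (by exact (Integrable.of_finite).sub Integrable.of_finite)
    (integrable_const _), integral_sub (by exact (Integrable.of_finite).sub Integrable.of_finite)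
    Integrable.of_finite, integral_sub Integrable.of_finite Integrable.of_finite,
    integral_const_mul, integral_mul_const, integral_const]
  simp [measure_univ]

end AuxLemmas

/-- Under the hole-punching graph-cluster randomization design with `0 < p_t < 1` and
`0 < p_hp < 1`, if all potential outcomes are non-negative then, for `t1 ≠ t2`, the
cluster-form covariance estimator is downward biased:
`E[Ĉov[μ̂(t1), μ̂(t2)]] ≤ Cov[μ̂(t1), μ̂(t2)]`. -/

theorem covariance_estimator_downward_biased
    {C : Type*} [Fintype C] [DecidableEq C] {N : ℕ} (hN : 1 ≤ N)
    (pt php : ℝ) (hpt0 : 0 < pt) (hpt1 : pt < 1) (hphp0 : 0 < php) (hphp1 : php < 1)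
    (c : Fin N → C) (Y : Fin N → Bool → ℝ) (hY : ∀ (i : Fin N) (t : Bool), 0 ≤ Y i t)
    (p : Bool → ℝ) (hp : ∀ (i : Fin N) (t : Bool), margProp pt php c i t = p t)
    (pj : Bool → Bool → ℝ)
    (hpj : ∀ (i j : Fin N) (t1 t2 : Bool), i ≠ j → c i = c j →
      jointProp pt php c i j t1 t2 = pj t1 t2)
    (t1 t2 : Bool) (ht : t1 ≠ t2) :
    ∫ ω, covHat c Y p pj t1 t2 ω ∂(designMeasure C N pt php)
      ≤ cov (designMeasure C N pt php) (htEst pt php c Y t1) (htEst pt php c Y t2) := by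
  classical
  haveI hPM : IsProbabilityMeasure (designMeasure C N pt php) :=
    designProb hpt0 hpt1 hphp0 hphp1
  obtain ⟨i0⟩ : Nonempty (Fin N) := ⟨⟨0, hN⟩⟩
  have hP1 : 0 < p t1 := hp i0 t1 ▸ marg_pos hpt0 hpt1 hphp0 hphp1 c i0 t1
  have hP2 : 0 < p t2 := hp i0 t2 ▸ marg_pos hpt0 hpt1 hphp0 hphp1 c i0 t2
  have hPt : ∀ t : Bool, 0 < p t := fun t => hp i0 t ▸ marg_pos hpt0 hpt1 hphp0 hphp1 c i0 t
  -- abbreviations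
  set S : ℝ := ∑ i, ∑ j, if i ≠ j ∧ c i = c j then Y i t1 * Y j t2 else 0 with hS
  set Dd : ℝ := ∑ i, Y i t1 * Y i t2 with hDd
  set Q1 : ℝ := ∑ i, Y i t1 ^ 2 with hQ1
  set Q2 : ℝ := ∑ i, Y i t2 ^ 2 with hQ2
  -- E[Qhat]
  have hQint : ∀ t : Bool, ∫ ω, Qhat c Y t ω ∂(designMeasure C N pt php)
      = p t * ∑ i, Y i t ^ 2 := by
    intro t
    unfold Qhat
    simp only [Finset.sum_filter]
    rw [integral_finset_sum _ (fun i _ => Integrable.of_finite), Finset.mul_sum]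
    refine Finset.sum_congr rfl fun i _ => ?_
    rw [integral_ite_eq (designMeasure C N pt php) (fun ω => treat c i ω = t) (Y i t ^ 2)]
    rw [show ((designMeasure C N pt php) {ω | treat c i ω = t}).toReal = p t from hp i t]
  -- E[sum of Shat]
  have hSpt : ∀ ω : (C → Bool) × (Fin N → Bool), (∑ k : C, Shat c Y t1 t2 k ω)
      = ∑ i, ∑ j, if c i = c j ∧ treat c i ω = t1 ∧ treat c j ω = t2
          then Y i t1 * Y j t2 else 0 := by
    intro ω
    unfold Shat
    simp only [Finset.sum_filter]
    rw [Finset.sum_comm]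
    refine Finset.sum_congr rfl fun i _ => ?_
    have hpull : ∀ k : C, (if c i = k ∧ treat c i ω = t1
        then ∑ a, (if c a = k ∧ treat c a ω = t2 then Y i t1 * Y a t2 else 0) else 0)
        = ∑ a, if c i = k ∧ treat c i ω = t1
            then (if c a = k ∧ treat c a ω = t2 then Y i t1 * Y a t2 else 0) else 0 := by
      intro k; split <;> simp
    simp only [hpull]
    rw [Finset.sum_comm]
    refine Finset.sum_congr rfl fun j _ => ?_
    rw [Finset.sum_eq_single (c i)
      (fun k _ hk => by
        by_cases h1 : c i = k ∧ treat c i ω = t1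
        · exact absurd h1.1.symm hk
        · rw [if_neg h1])
      (by intro h; exact absurd (Finset.mem_univ _) h)]
    by_cases h1 : treat c i ω = t1 <;> by_cases h2 : treat c j ω = t2 <;>
      by_cases h3 : c i = c j <;> simp [h1, h2, h3, eq_comm]
  have hSint : ∫ ω, (∑ k : C, Shat c Y t1 t2 k ω) ∂(designMeasure C N pt php)
      = pj t1 t2 * S := by
    simp only [hSpt]
    rw [integral_finset_sum _ (fun i _ => Integrable.of_finite)]
    have hterm : ∀ i j : Fin N,
        ∫ ω, (if c i = c j ∧ treat c i ω = t1 ∧ treat c j ω = t2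
          then Y i t1 * Y j t2 else 0) ∂(designMeasure C N pt php)
        = if i ≠ j ∧ c i = c j then pj t1 t2 * (Y i t1 * Y j t2) else 0 := by
      intro i j
      by_cases hcc : c i = c j
      · have hcol : (fun ω : (C → Bool) × (Fin N → Bool) =>
            if c i = c j ∧ treat c i ω = t1 ∧ treat c j ω = t2 then Y i t1 * Y j t2 else 0)
            = fun ω => if treat c i ω = t1 ∧ treat c j ω = t2 then Y i t1 * Y j t2 else 0 := by
          funext ω; simp [hcc]
        rw [hcol, integral_ite_eq (designMeasure C N pt php)
          (fun ω => treat c i ω = t1 ∧ treat c j ω = t2) (Y i t1 * Y j t2)]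
        by_cases hij : i = j
        · subst hij
          rw [show ((designMeasure C N pt php)
              {ω | treat c i ω = t1 ∧ treat c i ω = t2}).toReal
            = jointProp pt php c i i t1 t2 from rfl, joint_diag c i ht]
          simp
        · rw [show ((designMeasure C N pt php)
              {ω | treat c i ω = t1 ∧ treat c j ω = t2}).toReal
            = jointProp pt php c i j t1 t2 from rfl, hpj i j t1 t2 hij hcc]
          rw [if_pos ⟨hij, hcc⟩]
      · have hcol : (fun ω : (C → Bool) × (Fin N → Bool) =>
            if c i = c j ∧ treat c i ω = t1 ∧ treat c j ω = t2 then Y i t1 * Y j t2 else 0)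
            = fun _ => (0 : ℝ) := by
          funext ω; simp [hcc]
        rw [hcol, integral_zero, if_neg (fun h => hcc h.2)]
    rw [hS, Finset.mul_sum]
    refine Finset.sum_congr rfl fun i _ => ?_
    rw [integral_finset_sum _ (fun j _ => Integrable.of_finite), Finset.mul_sum]
    refine Finset.sum_congr rfl fun j _ => ?_
    rw [hterm i j]
    by_cases h : i ≠ j ∧ c i = c j <;> simp [h]
  -- E[htEst]
  have hEt : ∀ t : Bool, ∫ ω, htEst pt php c Y t ω ∂(designMeasure C N pt php)
      = (1 / (N : ℝ)) * ∑ i, Y i t := by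
    intro t
    unfold htEst
    rw [integral_const_mul, integral_finset_sum _ (fun i _ => Integrable.of_finite)]
    congr 1
    refine Finset.sum_congr rfl fun i _ => ?_
    rw [integral_ite_eq (designMeasure C N pt php) (fun ω => treat c i ω = t)
      (Y i t / margProp pt php c i t)]
    rw [show ((designMeasure C N pt php) {ω | treat c i ω = t}).toReal = p t from hp i t,
      hp i t, mul_comm]
    exact div_mul_cancel₀ (Y i t) (hPt t).ne'
  -- E[htEst t1 * htEst t2]
  have hXY : ∫ ω, htEst pt php c Y t1 ω * htEst pt php c Y t2 ω ∂(designMeasure C N pt php)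
      = (1 / (N : ℝ)) ^ 2 * ∑ i, ∑ j,
          jointProp pt php c i j t1 t2 * (Y i t1 / p t1 * (Y j t2 / p t2)) := by
    have hpw : ∀ ω : (C → Bool) × (Fin N → Bool),
        htEst pt php c Y t1 ω * htEst pt php c Y t2 ω
        = (1 / (N : ℝ)) ^ 2 * ∑ i, ∑ j,
            if treat c i ω = t1 ∧ treat c j ω = t2
            then Y i t1 / p t1 * (Y j t2 / p t2) else 0 := by
      intro ω
      unfold htEst
      simp only [hp]
      rw [mul_mul_mul_comm, Finset.sum_mul_sum]
      congr 1
      · ring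
      · refine Finset.sum_congr rfl fun i _ => Finset.sum_congr rfl fun j _ => ?_
        by_cases h1 : treat c i ω = t1 <;> by_cases h2 : treat c j ω = t2 <;>
          simp [h1, h2]
    simp only [hpw]
    rw [integral_const_mul, integral_finset_sum _ (fun i _ => Integrable.of_finite)]
    congr 1
    refine Finset.sum_congr rfl fun i _ => ?_
    rw [integral_finset_sum _ (fun j _ => Integrable.of_finite)]
    refine Finset.sum_congr rfl fun j _ => ?_
    rw [integral_ite_eq (designMeasure C N pt php)
      (fun ω => treat c i ω = t1 ∧ treat c j ω = t2) (Y i t1 / p t1 * (Y j t2 / p t2))]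
    rfl
  -- the covariance
  have hcov : cov (designMeasure C N pt php) (htEst pt php c Y t1) (htEst pt php c Y t2)
      = (1 / (N : ℝ)) ^ 2 * (pj t1 t2 / (p t1 * p t2) * S - S - Dd) := by
    rw [cov_eq_sub, hXY, hEt t1, hEt t2]
    have hterm : ∀ i j : Fin N,
        jointProp pt php c i j t1 t2 * (Y i t1 / p t1 * (Y j t2 / p t2))
        = (if i ≠ j ∧ c i = c j then pj t1 t2 / (p t1 * p t2) * (Y i t1 * Y j t2) else 0)
          + (if i = j then (0:ℝ) else if c i = c j then 0 else Y i t1 * Y j t2) := by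
      intro i j
      by_cases hij : i = j
      · subst hij
        rw [joint_diag c i ht]
        simp
      · by_cases hcc : c i = c j
        · rw [hpj i j t1 t2 hij hcc, if_pos ⟨hij, hcc⟩, if_neg hij, if_pos hcc]
          field_simp
          ring
        · rw [joint_eq_mul hpt0 hpt1 hphp0 hphp1 c hcc, hp i t1, hp j t2,
            if_neg (fun h => hcc h.2), if_neg hij, if_neg hcc]
          field_simp
          ring
    simp only [hterm]
    simp only [Finset.sum_add_distrib]
    have e1 : (∑ i, ∑ j, if i ≠ j ∧ c i = c j
        then pj t1 t2 / (p t1 * p t2) * (Y i t1 * Y j t2) else 0)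
        = pj t1 t2 / (p t1 * p t2) * S := by
      rw [hS, Finset.mul_sum]
      refine Finset.sum_congr rfl fun i _ => ?_
      rw [Finset.mul_sum]
      refine Finset.sum_congr rfl fun j _ => ?_
      by_cases h : i ≠ j ∧ c i = c j <;> simp [h]
    have e2 : (∑ i : Fin N, ∑ j : Fin N,
        if i = j then (0:ℝ) else if c i = c j then 0 else Y i t1 * Y j t2)
        = (∑ i, ∑ j, Y i t1 * Y j t2) - Dd
          - S := by
      rw [hDd, hS, ← Finset.sum_sub_distrib, ← Finset.sum_sub_distrib]
      refine Finset.sum_congr rfl fun i _ => ?_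
      rw [show (∑ j, Y i t1 * Y j t2) - Y i t1 * Y i t2
          = ∑ j, ((Y i t1 * Y j t2) - if i = j then Y i t1 * Y j t2 else 0) by
        rw [Finset.sum_sub_distrib]
        congr 1
        rw [Finset.sum_ite_eq (Finset.univ) i (fun j => Y i t1 * Y j t2)]
        simp]
      rw [← Finset.sum_sub_distrib]
      refine Finset.sum_congr rfl fun j _ => ?_
      by_cases hij : i = j
      · subst hij; simp
      · by_cases hcc : c i = c j <;> simp [hij, hcc]
    rw [e1, e2]
    rw [show (∑ i, ∑ j, Y i t1 * Y j t2) = (∑ i, Y i t1) * (∑ j, Y j t2) from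
      (Finset.sum_mul_sum _ _ _ _).symm]
    ring
  -- E[covHat]
  have hEcov : ∫ ω, covHat c Y p pj t1 t2 ω ∂(designMeasure C N pt php)
      = (1 / (N : ℝ)) ^ 2 * ((1 / (p t1 * p t2) - 1 / pj t1 t2) * (pj t1 t2 * S)
          - p t1 * Q1 / (2 * p t1) - p t2 * Q2 / (2 * p t2)) := by
    unfold covHat
    rw [integral_const_mul]
    rw [integral_sub (by exact (Integrable.of_finite).sub Integrable.of_finite)
      Integrable.of_finite,
      integral_sub Integrable.of_finite Integrable.of_finite,
      integral_const_mul, integral_div, integral_div, hSint, hQint t1, hQint t2]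
    rw [hQ1, hQ2]
    ring
  -- J/J * S = S
  have hJJ : pj t1 t2 / pj t1 t2 * S = S := by
    by_cases hex : ∃ a b : Fin N, a ≠ b ∧ c a = c b
    · obtain ⟨a, b, hab, hcc⟩ := hex
      have hJ : 0 < pj t1 t2 :=
        hpj a b t1 t2 hab hcc ▸ joint_pos hpt0 hpt1 hphp0 hphp1 c hab hcc t1 t2
      rw [div_self hJ.ne']
      ring
    · have hS0 : S = 0 := by
        rw [hS]
        refine Finset.sum_eq_zero fun i _ => Finset.sum_eq_zero fun j _ => ?_
        rw [if_neg]
        rintro ⟨h1, h2⟩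
        exact hex ⟨i, j, h1, h2⟩
      rw [hS0, mul_zero]
  -- diagonal bound
  have hsq : Dd ≤ Q1 / 2 + Q2 / 2 := by
    rw [hDd, hQ1, hQ2]
    calc (∑ i, Y i t1 * Y i t2) ≤ ∑ i, (Y i t1 ^ 2 / 2 + Y i t2 ^ 2 / 2) :=
          Finset.sum_le_sum fun i _ => by nlinarith [sq_nonneg (Y i t1 - Y i t2)]
      _ = (∑ i, Y i t1 ^ 2) / 2 + (∑ i, Y i t2 ^ 2) / 2 := by
          rw [Finset.sum_add_distrib, ← Finset.sum_div, ← Finset.sum_div]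
  rw [hEcov, hcov]
  apply mul_le_mul_of_nonneg_left _ (by positivity)
  have e1 : (1 / (p t1 * p t2) - 1 / pj t1 t2) * (pj t1 t2 * S)
      = pj t1 t2 / (p t1 * p t2) * S - pj t1 t2 / pj t1 t2 * S := by ring
  have e2 : p t1 * Q1 / (2 * p t1) = Q1 / 2 := by
    field_simp
  have e3 : p t2 * Q2 / (2 * p t2) = Q2 / 2 := by
    field_simp
  rw [e1, e2, e3, hJJ]
  linarith
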